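/- Under the same smoothness and update assumptions, if r_t = ‖a‖/‖b‖ satisfies r_t ≥ √(cos²θ + 3) + cos θ where cos θ = ⟨a,b⟩/(‖a‖‖b‖), and ηL ≤ 2(min(‖a‖²,‖b‖²) + ⟨a,b⟩)/‖a+b‖² with ‖a+b‖ > 0 and min(‖a‖²,‖b‖²) + ⟨a,b⟩ > 0, then the summed loss decrease gap Δ_t = (f^i(ω_t) − f^i(ω_{t+1})) − (f^o(ω_t) − f^o(ω_{t+1})) ≥ 0. -/

import Mathlib

set_option maxHeartbeats 1000000


/-- Under the same smoothness and update assumptions, if `r_t = ‖a‖/‖b‖` satisfies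
`r_t ≥ √(cos²θ + 3) + cosθ` with `cosθ = ⟪a,b⟫/(‖a‖‖b‖)`, and
`ηL ≤ 2(min(‖a‖²,‖b‖²) + ⟪a,b⟫)/‖a+b‖²` with `‖a+b‖ > 0` and
`min(‖a‖²,‖b‖²) + ⟪a,b⟫ > 0`, then the summed loss decrease gap is nonnegative. -/
theorem summed_loss_gap_nonneg {d : ℕ}
    (fi fo : EuclideanSpace ℝ (Fin d) → ℝ) (L η : ℝ) (hη : 0 < η)
    (hfi : ∀ ω ω', |fi ω' - fi ω - inner ℝ (gradient fi ω) (ω' - ω)| ≤ L / 2 * ‖ω' - ω‖ ^ 2)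
    (hfo : ∀ ω ω', |fo ω' - fo ω - inner ℝ (gradient fo ω) (ω' - ω)| ≤ L / 2 * ‖ω' - ω‖ ^ 2)
    (ωt : EuclideanSpace ℝ (Fin d)) (a b : EuclideanSpace ℝ (Fin d))
    (ha : a = gradient fi ωt) (hb : b = gradient fo ωt)
    (ha0 : a ≠ 0) (hb0 : b ≠ 0)
    (ωt1 : EuclideanSpace ℝ (Fin d)) (hstep : ωt1 = ωt - η • (a + b))
    (hr : ‖a‖ / ‖b‖ ≥
      Real.sqrt ((inner ℝ a b / (‖a‖ * ‖b‖)) ^ 2 + 3) + inner ℝ a b / (‖a‖ * ‖b‖))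
    (hsum : ‖a + b‖ > 0)
    (hmin : min (‖a‖ ^ 2) (‖b‖ ^ 2) + inner ℝ a b > 0)
    (hηL : η * L ≤ 2 * (min (‖a‖ ^ 2) (‖b‖ ^ 2) + inner ℝ a b) / ‖a + b‖ ^ 2) :
    (fi ωt - fi ωt1) - (fo ωt - fo ωt1) ≥ 0 := by
  have hna : (0:ℝ) < ‖a‖ := norm_pos_iff.mpr ha0
  have hnb : (0:ℝ) < ‖b‖ := norm_pos_iff.mpr hb0
  set s : ℝ := inner ℝ a b with hs
  set c : ℝ := s / (‖a‖ * ‖b‖) with hc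
  have hcs : |s| ≤ ‖a‖ * ‖b‖ := abs_real_inner_le_norm a b
  have habpos : (0:ℝ) < ‖a‖ * ‖b‖ := by positivity
  have hc1 : -1 ≤ c := by
    rw [hc, le_div_iff₀ habpos]
    nlinarith [abs_le.mp hcs]
  have hcval : c * (‖a‖ * ‖b‖) = s := div_mul_cancel₀ s (ne_of_gt habpos)
  -- sqrt bound
  have hsqnn : 0 ≤ Real.sqrt (c ^ 2 + 3) := Real.sqrt_nonneg _
  have hsqsq : Real.sqrt (c ^ 2 + 3) ^ 2 = c ^ 2 + 3 :=
    Real.sq_sqrt (by positivity)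
  have hsq1 : 1 - c ≤ Real.sqrt (c ^ 2 + 3) := by
    have : Real.sqrt ((1 - c) ^ 2) ≤ Real.sqrt (c ^ 2 + 3) :=
      Real.sqrt_le_sqrt (by nlinarith)
    rw [Real.sqrt_sq_eq_abs] at this
    exact le_trans (le_abs_self _) this
  -- from hr: ‖a‖ ≥ ‖b‖ * (sqrt + c)
  have hr' : ‖b‖ * (Real.sqrt (c ^ 2 + 3) + c) ≤ ‖a‖ := by
    have h := (le_div_iff₀ hnb).mp hr
    linarith
  have hab : ‖b‖ ≤ ‖a‖ := by nlinarith
  have hmineq : min (‖a‖ ^ 2) (‖b‖ ^ 2) = ‖b‖ ^ 2 :=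
    min_eq_right (by nlinarith)
  -- key inequality: ‖a‖² - 2s - 3‖b‖² ≥ 0
  have hkey : ‖a‖ ^ 2 - 2 * s - 3 * ‖b‖ ^ 2 ≥ 0 := by
    have h1 : ‖b‖ * Real.sqrt (c ^ 2 + 3) ≤ ‖a‖ - c * ‖b‖ := by linarith
    have h2 : (0:ℝ) ≤ ‖b‖ * Real.sqrt (c ^ 2 + 3) := by positivity
    nlinarith [sq_nonneg (‖a‖ - c * ‖b‖), hcval]
  -- displacement computations
  have hδ : ωt1 - ωt = -(η • (a + b)) := by rw [hstep]; abel
  have hδn : ‖ωt1 - ωt‖ ^ 2 = η ^ 2 * ‖a + b‖ ^ 2 := by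
    rw [hδ, norm_neg, norm_smul, Real.norm_eq_abs, abs_of_pos hη, mul_pow]
  have hia : (inner ℝ a (ωt1 - ωt) : ℝ) = -(η * (‖a‖ ^ 2 + s)) := by
    rw [hδ, inner_neg_right, real_inner_smul_right, inner_add_right,
      real_inner_self_eq_norm_sq, hs]
  have hib : (inner ℝ b (ωt1 - ωt) : ℝ) = -(η * (s + ‖b‖ ^ 2)) := by
    rw [hδ, inner_neg_right, real_inner_smul_right, inner_add_right,
      real_inner_self_eq_norm_sq, hs, real_inner_comm b a]
  -- smoothness bounds
  have hAi := abs_le.mp (hfi ωt ωt1)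
  have hAo := abs_le.mp (hfo ωt ωt1)
  rw [← ha] at hAi
  rw [← hb] at hAo
  rw [hia] at hAi
  rw [hib] at hAo
  rw [hδn] at hAi hAo
  -- step size bound
  have hηL' : η * L * ‖a + b‖ ^ 2 ≤ 2 * (‖b‖ ^ 2 + s) := by
    have := (le_div_iff₀ (by positivity : (0:ℝ) < ‖a + b‖ ^ 2)).mp hηL
    rw [hmineq] at this
    linarith
  rw [hmineq] at hmin
  have hηL'' : η * (η * L * ‖a + b‖ ^ 2) ≤ η * (2 * (‖b‖ ^ 2 + s)) :=
    mul_le_mul_of_nonneg_left hηL' (le_of_lt hη)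
  nlinarith [hAi.1, hAi.2, hAo.1, hAo.2, mul_le_mul_of_nonneg_left hkey (le_of_lt hη)]
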